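/- Let Z = {P_1,...,P_r} be distinct points in P^2 with multiplicity vectors m = (m_1,...,m_r) of nonnegative integers. Suppose C is a nonzero homogeneous polynomial of degree β = α(I(mZ)) vanishing to order at least m_i at each P_i, and C = C_1 · C_2 is a factorization into nonzero homogeneous polynomials. Let m_i^(j) = ord_{P_i} C_j and β_j = deg C_j. Then β_j = α(I(m^(j) Z)) for j = 1, 2; that is, each factor has minimal degree among curves with its own multiplicity vector. -/

import Mathlib

open MvPolynomial

def VanishToOrder {K : Type*} [Field K] (f : MvPolynomial (Fin 3) K) (p : Fin 3 → K)
    (k : ℕ) : Prop :=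
  ∀ l : List (Fin 3), l.length < k →
    MvPolynomial.eval p (l.foldl (fun g i => MvPolynomial.pderiv i g) f) = 0

/-- α(I(mZ)): the least degree of a nonzero homogeneous polynomial vanishing to order at
least `m i` at each point `P i`. -/
noncomputable def minDegree {K : Type*} [Field K] {r : ℕ} (P : Fin r → (Fin 3 → K))
    (m : Fin r → ℕ) : ℕ :=
  sInf {n | ∃ f : MvPolynomial (Fin 3) K,
    f ≠ 0 ∧ MvPolynomial.IsHomogeneous f n ∧ ∀ i, VanishToOrder f (P i) (m i)}

section Aux

variable {K : Type*} [Field K]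

lemma coeff_pderiv' (i : Fin 3) (g : MvPolynomial (Fin 3) K) (c : Fin 3 →₀ ℕ) :
    coeff c (pderiv i g) = (c i + 1) * coeff (c + Finsupp.single i 1) g := by
  induction g using MvPolynomial.induction_on' with
  | add p q hp hq => simp [map_add, coeff_add, hp, hq, mul_add]
  | monomial s a =>
    rw [pderiv_monomial]
    simp only [coeff_monomial]
    by_cases hs : s = c + Finsupp.single i 1
    · have hsi : s i = c i + 1 := by simp [hs]
      have : s - Finsupp.single i 1 = c := by
        ext j
        rcases eq_or_ne j i with rfl | hj
        · simp [Finsupp.tsub_apply, hsi]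
        · simp [Finsupp.tsub_apply, hs, Finsupp.single_apply, Ne.symm hj]
      simp [this, hsi, hs, mul_comm]
    · rw [if_neg hs, mul_zero]
      by_cases h2 : s - Finsupp.single i 1 = c
      · rw [if_pos h2]
        have : s i = 0 := by
          by_contra h3
          apply hs
          ext j
          rcases eq_or_ne j i with rfl | hj
          · have hc : c j = s j - 1 := by rw [← h2]; simp [Finsupp.tsub_apply]
            simp [hc, Finsupp.single_apply]
            omega
          · have hc : c j = s j := by rw [← h2]; simp [Finsupp.tsub_apply, Finsupp.single_apply, Ne.symm hj]
            simp [hc, Finsupp.single_apply, Ne.symm hj]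
        simp [this]
      · rw [if_neg h2]

lemma deg_eq (d : Fin 3 →₀ ℕ) : d.degree = d 0 + d 1 + d 2 := by
  have : d.degree = ∑ i : Fin 3, d i := by
    rw [Finsupp.degree]
    exact Finset.sum_subset (Finset.subset_univ _) (by
      intro x _ hx
      simpa using Finsupp.notMem_support_iff.mp hx)
  rw [this, Fin.sum_univ_three]

lemma deg_add (d e : Fin 3 →₀ ℕ) : (d + e).degree = d.degree + e.degree := by
  simp [deg_eq]; ring

lemma deg_single (i : Fin 3) (n : ℕ) : (Finsupp.single i n).degree = n := by
  fin_cases i <;> simp [deg_eq, Finsupp.single_apply]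


lemma eval_zero_foldl : ∀ (l : List (Fin 3)) (k : ℕ) (g : MvPolynomial (Fin 3) K),
    l.length < k → (∀ c : Fin 3 →₀ ℕ, c.degree < k → coeff c g = 0) →
    MvPolynomial.eval (0 : Fin 3 → K) (l.foldl (fun g i => MvPolynomial.pderiv i g) g) = 0 := by
  intro l
  induction l with
  | nil =>
    intro k g hk h
    have h0 := h 0 (by simp [deg_eq]; omega)
    simp only [List.foldl_nil, MvPolynomial.eval_zero]
    exact h0
  | cons i l ih =>
    intro k g hk h
    simp only [List.foldl_cons]
    refine ih (k - 1) _ (by simp at hk; omega) ?_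
    intro c hc
    rw [coeff_pderiv']
    rw [h (c + Finsupp.single i 1) (by rw [deg_add, deg_single]; omega), mul_zero]

lemma coeff_iterate (i : Fin 3) : ∀ (n : ℕ) (g : MvPolynomial (Fin 3) K) (e : Fin 3 →₀ ℕ),
    coeff e ((fun g => pderiv i g)^[n] g) =
      (∏ k ∈ Finset.range n, ((e i : K) + k + 1)) * coeff (e + Finsupp.single i n) g := by
  intro n
  induction n with
  | zero => simp
  | succ n ih =>
    intro g e
    rw [Function.iterate_succ_apply, ih, coeff_pderiv', Finset.prod_range_succ]
    have h1 : (e + Finsupp.single i n) i = e i + n := by simp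
    have h2 : e + Finsupp.single i n + Finsupp.single i 1 = e + Finsupp.single i (n + 1) := by
      rw [add_assoc, ← Finsupp.single_add]
    rw [h1, h2]
    push_cast
    ring

lemma foldl_replicate (i : Fin 3) : ∀ (n : ℕ) (g : MvPolynomial (Fin 3) K),
    (List.replicate n i).foldl (fun g i => MvPolynomial.pderiv i g) g =
      (fun g => pderiv i g)^[n] g := by
  intro n
  induction n with
  | zero => simp
  | succ n ih =>
    intro g
    rw [List.replicate_succ, List.foldl_cons, ih, ← Function.iterate_succ_apply]

lemma prod_cast_ne_zero [CharZero K] (a : ℕ) (n : ℕ) :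
    (∏ k ∈ Finset.range n, ((a : K) + k + 1)) ≠ 0 := by
  refine Finset.prod_ne_zero_iff.mpr fun k _ => ?_
  have : ((a : K) + k + 1) = ((a + k + 1 : ℕ) : K) := by push_cast; ring
  rw [this]
  exact Nat.cast_ne_zero.mpr (by omega)

lemma vanish_zero_iff [CharZero K] (g : MvPolynomial (Fin 3) K) (k : ℕ) :
    VanishToOrder g (0 : Fin 3 → K) k ↔ ∀ c : Fin 3 →₀ ℕ, c.degree < k → coeff c g = 0 := by
  constructor
  · intro h c hc
    by_contra hne
    set l := List.replicate (c 0) (0 : Fin 3) ++ (List.replicate (c 1) (1 : Fin 3) ++ List.replicate (c 2) (2 : Fin 3)) with hl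
    have hlen : l.length < k := by
      have hd := deg_eq c
      simp only [hl, List.length_append, List.length_replicate]
      omega
    have := h l hlen
    rw [hl, List.foldl_append, List.foldl_append, foldl_replicate, foldl_replicate,
      foldl_replicate] at this
    rw [show (MvPolynomial.eval (0 : Fin 3 → K)) = MvPolynomial.constantCoeff from
      MvPolynomial.eval_zero] at this
    rw [show (MvPolynomial.constantCoeff
        ((fun g => pderiv 2 g)^[c 2] ((fun g => pderiv 1 g)^[c 1] ((fun g => pderiv 0 g)^[c 0] g))))
      = coeff 0 _ from rfl] at this
    rw [coeff_iterate, coeff_iterate, coeff_iterate] at this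
    have hc3 : (0 : Fin 3 →₀ ℕ) + Finsupp.single 2 (c 2) + Finsupp.single 1 (c 1)
        + Finsupp.single 0 (c 0) = c := by
      ext j
      fin_cases j <;> simp [Finsupp.single_apply]
    rw [hc3] at this
    rcases mul_eq_zero.mp this with h' | this
    · exact prod_cast_ne_zero _ _ h'
    rcases mul_eq_zero.mp this with h' | this
    · exact prod_cast_ne_zero _ _ h'
    rcases mul_eq_zero.mp this with h' | this
    · exact prod_cast_ne_zero _ _ h'
    · exact hne this
  · intro h l hl
    exact eval_zero_foldl l k g hl h

noncomputable def shift (p : Fin 3 → K) : MvPolynomial (Fin 3) K →ₐ[K] MvPolynomial (Fin 3) K :=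
  aeval (fun i => X i + MvPolynomial.C (p i))

lemma shift_X (p : Fin 3 → K) (n : Fin 3) :
    shift p (X n) = X n + MvPolynomial.C (p n) := aeval_X _ _

lemma shift_C (p : Fin 3 → K) (a : K) : shift p (MvPolynomial.C a) = MvPolynomial.C a := by
  simp [shift]

lemma pderiv_shift (p : Fin 3 → K) (i : Fin 3) (f : MvPolynomial (Fin 3) K) :
    pderiv i (shift p f) = shift p (pderiv i f) := by
  induction f using MvPolynomial.induction_on with
  | C a => simp [shift_C, pderiv_C]
  | add f g hf hg => simp [map_add, hf, hg]
  | mul_X f n hf =>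
    have h1 : shift p (f * X n) = shift p f * (X n + MvPolynomial.C (p n)) := by
      rw [map_mul, shift_X]
    have h2 : pderiv i (f * X n) = pderiv i f * X n + f * pderiv i (X n) := pderiv_mul
    rw [h1, pderiv_mul, map_add, hf, h2, map_add, map_mul, map_mul, shift_X]
    congr 1
    rcases eq_or_ne n i with rfl | hn
    · simp [pderiv_C]
    · simp [hn, Ne.symm hn, pderiv_C]

lemma eval_shift (p : Fin 3 → K) (f : MvPolynomial (Fin 3) K) :
    MvPolynomial.eval (0 : Fin 3 → K) (shift p f) = MvPolynomial.eval p f := by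
  induction f using MvPolynomial.induction_on with
  | C a => simp [shift_C]
  | add f g hf hg => rw [map_add, map_add, map_add, hf, hg]
  | mul_X f n hf =>
    have h1 : shift p (f * X n) = shift p f * (X n + MvPolynomial.C (p n)) := by
      rw [map_mul, shift_X]
    rw [h1, map_mul, map_mul, hf]
    simp

lemma shift_shift (p : Fin 3 → K) (f : MvPolynomial (Fin 3) K) :
    shift (-p) (shift p f) = f := by
  induction f using MvPolynomial.induction_on with
  | C a => simp [shift_C]
  | add f g hf hg => rw [map_add, map_add, hf, hg]
  | mul_X f n hf =>
    have h1 : shift p (f * X n) = shift p f * (X n + MvPolynomial.C (p n)) := by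
      rw [map_mul, shift_X]
    rw [h1, map_mul, map_add, shift_X, shift_C, hf]
    have : (X n + MvPolynomial.C ((-p) n) + MvPolynomial.C (p n) : MvPolynomial (Fin 3) K)
        = X n := by
      rw [add_assoc, ← C_add]
      simp
    rw [this]

lemma shift_ne_zero {p : Fin 3 → K} {f : MvPolynomial (Fin 3) K} (hf : f ≠ 0) :
    shift p f ≠ 0 := by
  intro h
  apply hf
  rw [← shift_shift p f, h, map_zero]

lemma foldl_shift (p : Fin 3 → K) : ∀ (l : List (Fin 3)) (f : MvPolynomial (Fin 3) K),
    l.foldl (fun g i => MvPolynomial.pderiv i g) (shift p f) =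
      shift p (l.foldl (fun g i => MvPolynomial.pderiv i g) f) := by
  intro l
  induction l with
  | nil => simp
  | cons i l ih => intro f; rw [List.foldl_cons, List.foldl_cons, pderiv_shift, ih]

lemma vanish_iff_coeff [CharZero K] (f : MvPolynomial (Fin 3) K) (p : Fin 3 → K) (k : ℕ) :
    VanishToOrder f p k ↔ ∀ c : Fin 3 →₀ ℕ, c.degree < k → coeff c (shift p f) = 0 := by
  rw [← vanish_zero_iff]
  constructor <;> intro h l hl
  · rw [foldl_shift, eval_shift]; exact h l hl
  · have := h l hl
    rwa [foldl_shift, eval_shift] at this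

lemma vanish_mono {f : MvPolynomial (Fin 3) K} {p : Fin 3 → K} {k k' : ℕ} (h : k' ≤ k)
    (hv : VanishToOrder f p k) : VanishToOrder f p k' :=
  fun l hl => hv l (lt_of_lt_of_le hl h)

lemma vanish_mul [CharZero K] {f g : MvPolynomial (Fin 3) K} {p : Fin 3 → K} {a b : ℕ}
    (hf : VanishToOrder f p a) (hg : VanishToOrder g p b) :
    VanishToOrder (f * g) p (a + b) := by
  rw [vanish_iff_coeff] at hf hg ⊢
  intro c hc
  rw [map_mul, MvPolynomial.coeff_mul]
  refine Finset.sum_eq_zero fun x hx => ?_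
  have hsum : x.1 + x.2 = c := Finset.HasAntidiagonal.mem_antidiagonal.mp hx
  have hdeg : x.1.degree + x.2.degree < a + b := by rw [← deg_add, hsum]; exact hc
  rcases lt_or_ge x.1.degree a with h1 | h1
  · rw [hf x.1 h1, zero_mul]
  · rw [hg x.2 (by omega), mul_zero]

lemma not_vanish_mul [CharZero K] {f g : MvPolynomial (Fin 3) K} {p : Fin 3 → K} {a b : ℕ}
    (hf1 : VanishToOrder f p a) (hf2 : ¬ VanishToOrder f p (a + 1))
    (hg1 : VanishToOrder g p b) (hg2 : ¬ VanishToOrder g p (b + 1)) :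
    ¬ VanishToOrder (f * g) p (a + b + 1) := by
  set F := shift p f with hF
  set G := shift p g with hG
  rw [vanish_iff_coeff] at hf1 hf2 hg1 hg2
  push_neg at hf2 hg2
  obtain ⟨c₁, hc₁d, hc₁⟩ := hf2
  obtain ⟨c₂, hc₂d, hc₂⟩ := hg2
  have hc₁a : c₁.degree = a := by
    by_contra h; exact hc₁ (hf1 c₁ (by omega))
  have hc₂b : c₂.degree = b := by
    by_contra h; exact hc₂ (hg1 c₂ (by omega))
  set A := homogeneousComponent a F with hA
  set B := homogeneousComponent b G with hB
  have hAne : A ≠ 0 := by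
    rw [MvPolynomial.ne_zero_iff]
    exact ⟨c₁, by rwa [hA, coeff_homogeneousComponent, if_pos hc₁a]⟩
  have hBne : B ≠ 0 := by
    rw [MvPolynomial.ne_zero_iff]
    exact ⟨c₂, by rwa [hB, coeff_homogeneousComponent, if_pos hc₂b]⟩
  obtain ⟨c, hc⟩ := MvPolynomial.ne_zero_iff.mp (mul_ne_zero hAne hBne)
  have hABhom : (A * B).IsHomogeneous (a + b) :=
    (homogeneousComponent_isHomogeneous a F).mul (homogeneousComponent_isHomogeneous b G)
  have hcd : c.degree = a + b := by
    by_contra h; exact hc (hABhom.coeff_eq_zero h)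
  have hcoeff : coeff c (F * G) = coeff c (A * B) := by
    rw [MvPolynomial.coeff_mul, MvPolynomial.coeff_mul]
    refine Finset.sum_congr rfl fun x hx => ?_
    have hsum : x.1 + x.2 = c := Finset.HasAntidiagonal.mem_antidiagonal.mp hx
    have hdeg : x.1.degree + x.2.degree = a + b := by rw [← deg_add, hsum, hcd]
    rcases lt_trichotomy x.1.degree a with h1 | h1 | h1
    · rw [hf1 x.1 h1, hA, coeff_homogeneousComponent, if_neg (by omega), zero_mul, zero_mul]
    · have h2 : x.2.degree = b := by omega
      rw [hA, hB, coeff_homogeneousComponent, coeff_homogeneousComponent,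
        if_pos h1, if_pos h2]
    · rw [hg1 x.2 (by omega), hB, coeff_homogeneousComponent, if_neg (by omega)]
      ring
  rw [vanish_iff_coeff]
  push_neg
  exact ⟨c, by omega, by rwa [map_mul, ← hF, ← hG, hcoeff]⟩

lemma aux_minimal [CharZero K] {r : ℕ}
    (P : Fin r → (Fin 3 → K)) (m m₁ m₂ : Fin r → ℕ)
    (D D₁ D₂ : MvPolynomial (Fin 3) K) (β β₁ β₂ : ℕ)
    (hC0 : D ≠ 0) (hChom : MvPolynomial.IsHomogeneous D β)
    (hβ : β = minDegree P m)
    (hCvan : ∀ i, VanishToOrder D (P i) (m i))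
    (hfact : D = D₁ * D₂) (hC₁0 : D₁ ≠ 0) (hC₂0 : D₂ ≠ 0)
    (hC₁hom : MvPolynomial.IsHomogeneous D₁ β₁) (hC₂hom : MvPolynomial.IsHomogeneous D₂ β₂)
    (hord₁ : ∀ i, VanishToOrder D₁ (P i) (m₁ i) ∧ ¬ VanishToOrder D₁ (P i) (m₁ i + 1))
    (hord₂ : ∀ i, VanishToOrder D₂ (P i) (m₂ i) ∧ ¬ VanishToOrder D₂ (P i) (m₂ i + 1)) :
    β₁ = minDegree P m₁ := by
  have key : ∀ i, m i ≤ m₁ i + m₂ i := by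
    intro i
    by_contra h
    push_neg at h
    exact not_vanish_mul (hord₁ i).1 (hord₁ i).2 (hord₂ i).1 (hord₂ i).2
      (hfact ▸ vanish_mono (by omega) (hCvan i))
  have hβsum : β = β₁ + β₂ :=
    hChom.inj_right (hfact ▸ hC₁hom.mul hC₂hom) hC0
  have hmem₁ : β₁ ∈ {n | ∃ f : MvPolynomial (Fin 3) K,
      f ≠ 0 ∧ MvPolynomial.IsHomogeneous f n ∧ ∀ i, VanishToOrder f (P i) (m₁ i)} :=
    ⟨D₁, hC₁0, hC₁hom, fun i => (hord₁ i).1⟩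
  have hle : minDegree P m₁ ≤ β₁ := Nat.sInf_le hmem₁
  refine le_antisymm ?_ hle
  by_contra hlt
  push_neg at hlt
  obtain ⟨f, hf0, hfhom, hfvan⟩ := Nat.sInf_mem (⟨β₁, hmem₁⟩ : Set.Nonempty _)
  have hmem : minDegree P m₁ + β₂ ∈ {n | ∃ f : MvPolynomial (Fin 3) K,
      f ≠ 0 ∧ MvPolynomial.IsHomogeneous f n ∧ ∀ i, VanishToOrder f (P i) (m i)} :=
    ⟨f * D₂, mul_ne_zero hf0 hC₂0, hfhom.mul hC₂hom,
      fun i => vanish_mono (key i) (vanish_mul (hfvan i) ((hord₂ i).1))⟩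
  have := Nat.sInf_le hmem
  rw [minDegree] at hβ
  omega


end Aux

/-- Each factor of a divisor of minimal degree is of minimal degree for its own
multiplicity vector. -/
theorem factors_of_minimal_degree_are_minimal (K : Type*) [Field K] [IsAlgClosed K]
    [CharZero K] {r : ℕ}
    (P : Fin r → (Fin 3 → K)) (hInj : Function.Injective P) (hP : ∀ i, P i ≠ 0)
    (m m₁ m₂ : Fin r → ℕ) (C C₁ C₂ : MvPolynomial (Fin 3) K) (β β₁ β₂ : ℕ)
    (hC0 : C ≠ 0) (hChom : MvPolynomial.IsHomogeneous C β)
    (hβ : β = minDegree P m)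
    (hCvan : ∀ i, VanishToOrder C (P i) (m i))
    (hfact : C = C₁ * C₂) (hC₁0 : C₁ ≠ 0) (hC₂0 : C₂ ≠ 0)
    (hC₁hom : MvPolynomial.IsHomogeneous C₁ β₁) (hC₂hom : MvPolynomial.IsHomogeneous C₂ β₂)
    (hord₁ : ∀ i, VanishToOrder C₁ (P i) (m₁ i) ∧ ¬ VanishToOrder C₁ (P i) (m₁ i + 1))
    (hord₂ : ∀ i, VanishToOrder C₂ (P i) (m₂ i) ∧ ¬ VanishToOrder C₂ (P i) (m₂ i + 1)) :
    β₁ = minDegree P m₁ ∧ β₂ = minDegree P m₂ := by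
  exact ⟨aux_minimal P m m₁ m₂ C C₁ C₂ β β₁ β₂ hC0 hChom hβ hCvan hfact hC₁0 hC₂0
      hC₁hom hC₂hom hord₁ hord₂,
    aux_minimal P m m₂ m₁ C C₂ C₁ β β₂ β₁ hC0 hChom hβ hCvan
      (by rw [hfact, mul_comm]) hC₂0 hC₁0 hC₂hom hC₁hom hord₂ hord₁⟩
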